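/- arXiv:0812.4475 — 3 statements merged into one kernel-verified Lean document; each statement's English description precedes it below -/
import Mathlib

section
/- Let C, ε > 0 and let f : (−ε, 1+ε) → ℝ be a non-constant real analytic function such that f'(s)² ≤ C·f''(s) for every s ∈ [0,1]. Then f is strictly convex on (0,1), and moreover there is at most one point α ∈ (0,1) where f''(α) = 0. -/
/-- Lemma 2.4: a non-constant real-analytic function on `(-ε, 1+ε)` with
`f'(s)² ≤ C·f''(s)` on `[0,1]` is strictly convex on `(0,1)`, and `f''` vanishes
at most once in `(0,1)`. -/
theorem stmt2 (C ε : ℝ) (hC : 0 < C) (hε : 0 < ε) (f : ℝ → ℝ)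
    (hf : AnalyticOnNhd ℝ f (Set.Ioo (-ε) (1 + ε)))
    (hnc : ¬ ∀ x ∈ Set.Ioo (-ε) (1 + ε), ∀ y ∈ Set.Ioo (-ε) (1 + ε), f x = f y)
    (hineq : ∀ s ∈ Set.Icc (0:ℝ) 1, (deriv f s) ^ 2 ≤ C * deriv (deriv f) s) :
    StrictConvexOn ℝ (Set.Ioo (0:ℝ) 1) f ∧
      ∀ a ∈ Set.Ioo (0:ℝ) 1, ∀ b ∈ Set.Ioo (0:ℝ) 1,
        deriv (deriv f) a = 0 → deriv (deriv f) b = 0 → a = b := by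
  set U := Set.Ioo (-ε) (1 + ε) with hUdef
  have hUopen : IsOpen U := isOpen_Ioo
  have hUconn : IsPreconnected U := (convex_Ioo _ _).isPreconnected
  have hsub : Set.Icc (0:ℝ) 1 ⊆ U := fun t ht =>
    ⟨by linarith [ht.1], by linarith [ht.2]⟩
  set g := deriv (deriv f) with hgdef
  have hf1 : AnalyticOnNhd ℝ (deriv f) U := hf.deriv
  have hg : AnalyticOnNhd ℝ g U := hf1.deriv
  -- key: g cannot vanish identically on a nonempty open subinterval of U
  have key : ∀ x y : ℝ, x < y → Set.Ioo x y ⊆ U → Set.EqOn g 0 (Set.Ioo x y) → False := by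
    intro x y hxy hsubU heq
    have hz₀ : (x + y) / 2 ∈ Set.Ioo x y := ⟨by linarith, by linarith⟩
    have hev : g =ᶠ[nhds ((x + y) / 2)] 0 :=
      Filter.eventuallyEq_of_mem (isOpen_Ioo.mem_nhds hz₀) heq
    have hg0 : Set.EqOn g 0 U :=
      hg.eqOn_zero_of_preconnected_of_eventuallyEq_zero hUconn (hsubU hz₀) hev
    -- so f' = 0 on [0,1]
    have hf'0 : ∀ s ∈ Set.Icc (0:ℝ) 1, deriv f s = 0 := by
      intro s hs
      have h1 := hineq s hs
      have h2 : g s = 0 := hg0 (hsub hs)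
      have : (deriv f s) ^ 2 ≤ 0 := by rw [h2] at h1; linarith
      have := le_antisymm this (sq_nonneg _)
      exact pow_eq_zero_iff (by norm_num) |>.mp this
    -- so f' = 0 on all of U by analyticity
    have hz₁ : (1:ℝ)/2 ∈ Set.Ioo (0:ℝ) 1 := by norm_num
    have hev1 : deriv f =ᶠ[nhds ((1:ℝ)/2)] 0 := by
      refine Filter.eventuallyEq_of_mem (isOpen_Ioo.mem_nhds hz₁) ?_
      intro t ht
      exact hf'0 t ⟨le_of_lt ht.1, le_of_lt ht.2⟩
    have hdf0 : Set.EqOn (deriv f) 0 U :=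
      hf1.eqOn_zero_of_preconnected_of_eventuallyEq_zero hUconn
        (hsub ⟨by norm_num, by norm_num⟩ : (1:ℝ)/2 ∈ U) hev1
    -- hence f is constant on U, contradiction
    apply hnc
    intro p hp q hq
    have hdiff : DifferentiableOn ℝ f U := fun z hz => (hf z hz).differentiableAt.differentiableWithinAt
    refine (convex_Ioo _ _).is_const_of_fderivWithin_eq_zero hdiff ?_ hp hq
    intro z hz
    rw [fderivWithin_of_isOpen hUopen hz]
    have hd : HasDerivAt f 0 z := by
      have := (hf z hz).differentiableAt.hasDerivAt
      rwa [hdf0 hz] at this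
    ext
    simp [hd.hasFDerivAt.fderiv]
  -- g ≥ 0 on [0,1]
  have hgnn : ∀ s ∈ Set.Icc (0:ℝ) 1, 0 ≤ g s := by
    intro s hs
    have h1 := hineq s hs
    nlinarith [sq_nonneg (deriv f s)]
  -- deriv f is monotone on [0,1]
  have hmono : MonotoneOn (deriv f) (Set.Icc (0:ℝ) 1) := by
    apply monotoneOn_of_deriv_nonneg (convex_Icc 0 1)
    · exact fun z hz => (hf1 z (hsub hz)).continuousAt.continuousWithinAt
    · intro z hz
      rw [interior_Icc] at hz
      exact ((hf1 z (hsub ⟨le_of_lt hz.1, le_of_lt hz.2⟩)).differentiableAt).differentiableWithinAt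
    · intro z hz
      rw [interior_Icc] at hz
      exact hgnn z ⟨le_of_lt hz.1, le_of_lt hz.2⟩
  -- if deriv f takes equal values at two points of [0,1], contradiction
  have hconst : ∀ a b : ℝ, a ∈ Set.Icc (0:ℝ) 1 → b ∈ Set.Icc (0:ℝ) 1 → a < b →
      deriv f a = deriv f b → False := by
    intro a b ha hb hab heq
    apply key a b hab (fun t ht => hsub ⟨le_trans ha.1 (le_of_lt ht.1), le_trans (le_of_lt ht.2) hb.2⟩)
    intro t ht
    have htI : t ∈ Set.Icc (0:ℝ) 1 := ⟨le_trans ha.1 (le_of_lt ht.1), le_trans (le_of_lt ht.2) hb.2⟩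
    -- deriv f is constant (= deriv f a) in a neighborhood of t
    have hconst' : deriv f =ᶠ[nhds t] fun _ => deriv f a := by
      refine Filter.eventuallyEq_of_mem (isOpen_Ioo.mem_nhds ht) ?_
      intro u hu
      have huI : u ∈ Set.Icc (0:ℝ) 1 := ⟨le_trans ha.1 (le_of_lt hu.1), le_trans (le_of_lt hu.2) hb.2⟩
      have h1 : deriv f a ≤ deriv f u := hmono ha huI (le_of_lt hu.1)
      have h2 : deriv f u ≤ deriv f b := hmono huI hb (le_of_lt hu.2)
      rw [← heq] at h2
      exact (le_antisymm h2 h1).symm ▸ rfl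
    have : g t = deriv (fun _ => deriv f a) t := hconst'.deriv_eq
    rw [this, deriv_const]
    rfl
  have hsm : StrictMonoOn (deriv f) (Set.Ioo (0:ℝ) 1) := by
    intro a ha b hb hab
    have haI : a ∈ Set.Icc (0:ℝ) 1 := ⟨le_of_lt ha.1, le_of_lt ha.2⟩
    have hbI : b ∈ Set.Icc (0:ℝ) 1 := ⟨le_of_lt hb.1, le_of_lt hb.2⟩
    rcases lt_or_eq_of_le (hmono haI hbI (le_of_lt hab)) with h | h
    · exact h
    · exact absurd h (fun h => hconst a b haI hbI hab h)
  constructor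
  · apply StrictMonoOn.strictConvexOn_of_deriv (convex_Ioo 0 1)
    · exact fun z hz => (hf z (hsub ⟨le_of_lt hz.1, le_of_lt hz.2⟩)).continuousAt.continuousWithinAt
    · rwa [interior_Ioo]
  · intro a ha b hb hga hgb
    by_contra hne
    have hf'a : deriv f a = 0 := by
      have h1 := hineq a ⟨le_of_lt ha.1, le_of_lt ha.2⟩
      rw [hga, mul_zero] at h1
      have := le_antisymm h1 (sq_nonneg _)
      exact pow_eq_zero_iff (by norm_num) |>.mp this
    have hf'b : deriv f b = 0 := by
      have h1 := hineq b ⟨le_of_lt hb.1, le_of_lt hb.2⟩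
      rw [hgb, mul_zero] at h1
      have := le_antisymm h1 (sq_nonneg _)
      exact pow_eq_zero_iff (by norm_num) |>.mp this
    rcases lt_trichotomy a b with h | h | h
    · exact hconst a b ⟨le_of_lt ha.1, le_of_lt ha.2⟩ ⟨le_of_lt hb.1, le_of_lt hb.2⟩ h
        (hf'a.trans hf'b.symm)
    · exact hne h
    · exact hconst b a ⟨le_of_lt hb.1, le_of_lt hb.2⟩ ⟨le_of_lt ha.1, le_of_lt ha.2⟩ h
        (hf'b.trans hf'a.symm)
end

section
/- Let A be a bounded self-adjoint operator on the complex Hilbert space H, and let δ_A : K(H)_ah → K(H)_h be defined by δ_A(x) = xA − Ax, where K(H)_ah (resp. K(H)_h) denotes the compact anti-hermitian (resp. compact hermitian) operators. Then δ_A has closed range if and only if the spectrum of A is finite. Moreover, when the spectrum of A is finite, δ_A splits: its kernel and its range are closed complemented subspaces of K(H)_ah and K(H)_h respectively. -/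
set_option synthInstance.maxHeartbeats 1000000
set_option maxHeartbeats 1000000
noncomputable section

variable {H : Type*} [NormedAddCommGroup H] [InnerProductSpace ℂ H] [CompleteSpace H]

/-- The real subspace of compact anti-hermitian operators `K(H)_ah`. -/
def Kah (H : Type*) [NormedAddCommGroup H] [InnerProductSpace ℂ H] [CompleteSpace H] :
    Submodule ℝ (H →L[ℂ] H) where
  carrier := {x | IsCompactOperator ⇑x ∧ star x = -x}
  add_mem' := by
    rintro x y ⟨hxc, hxa⟩ ⟨hyc, hya⟩
    refine ⟨by simpa using hxc.add hyc, ?_⟩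
    rw [star_add, hxa, hya, neg_add]
  zero_mem' := ⟨by simpa using (isCompactOperator_zero : IsCompactOperator (0 : H → H)), by simp⟩
  smul_mem' := by
    rintro c x ⟨hxc, hxa⟩
    refine ⟨by simpa using hxc.smul c, ?_⟩
    rw [star_smul, hxa, star_trivial, smul_neg]

/-- The real subspace of compact hermitian operators `K(H)_h`. -/
def Kh (H : Type*) [NormedAddCommGroup H] [InnerProductSpace ℂ H] [CompleteSpace H] :
    Submodule ℝ (H →L[ℂ] H) where
  carrier := {x | IsCompactOperator ⇑x ∧ star x = x}
  add_mem' := by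
    rintro x y ⟨hxc, hxa⟩ ⟨hyc, hya⟩
    exact ⟨by simpa using hxc.add hyc, by rw [star_add, hxa, hya]⟩
  zero_mem' := ⟨by simpa using (isCompactOperator_zero : IsCompactOperator (0 : H → H)), by simp⟩
  smul_mem' := by
    rintro c x ⟨hxc, hxa⟩
    exact ⟨by simpa using hxc.smul c, by rw [star_smul, hxa, star_trivial]⟩


section Aux
set_option linter.unusedSectionVars false
open ContinuousLinearMap Complex


lemma approx_eig (A : H →L[ℂ] H) (hA : IsSelfAdjoint A) {l : ℂ} (hl : l ∈ spectrum ℂ A)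
    {ε : ℝ} (hε : 0 < ε) : ∃ ξ : H, ‖ξ‖ = 1 ∧ ‖A ξ - l • ξ‖ < ε := by
  by_contra hcon
  push_neg at hcon
  set T : H →L[ℂ] H := A - l • (1 : H →L[ℂ] H) with hT
  have hTapp : ∀ x, T x = A x - l • x := by intro x; simp [hT]
  have hb : ∀ x : H, ‖x‖ ≤ ε⁻¹ * ‖T x‖ := by
    intro x
    rcases eq_or_ne x 0 with rfl | hx
    · simp
    · have hx0 : (0:ℝ) < ‖x‖ := norm_pos_iff.mpr hx
      have h1 := hcon (‖x‖⁻¹ • x) (by simp [norm_smul, inv_mul_cancel₀ hx0.ne'])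
      have h2 : A ((‖x‖⁻¹ : ℝ) • x) - l • ((‖x‖⁻¹ : ℝ) • x) = (‖x‖⁻¹ : ℝ) • (T x) := by
        rw [hTapp, smul_sub, A.map_smul_of_tower, smul_comm]
      rw [h2, norm_smul, norm_inv, norm_norm] at h1
      have h3 : ‖x‖ * ε ≤ ‖T x‖ := (le_inv_mul_iff₀ hx0).mp h1
      exact (le_inv_mul_iff₀ hε).mpr (by linarith [mul_comm ‖x‖ ε])
  have him : l.im = 0 := hA.im_eq_zero_of_mem_spectrum hl
  have hlconj : (starRingEnd ℂ) l = l := Complex.conj_eq_iff_im.mpr him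
  have hTsa : IsSelfAdjoint T := by
    rw [IsSelfAdjoint, hT, star_sub, star_smul, star_one, hA, Complex.star_def, hlconj]
  have hanti : AntilipschitzWith (⟨ε⁻¹, by positivity⟩ : NNReal) T :=
    ContinuousLinearMap.antilipschitz_of_bound T (by exact_mod_cast hb)
  have hker : LinearMap.ker (T : H →ₗ[ℂ] H) = ⊥ := LinearMap.ker_eq_bot.mpr hanti.injective
  haveI : CompleteSpace (LinearMap.range (T : H →ₗ[ℂ] H)) := hanti.completeSpace_range_clm
  have hsurj : LinearMap.range (T : H →ₗ[ℂ] H) = ⊤ := by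
    rw [← Submodule.orthogonal_eq_bot_iff]
    rw [Submodule.eq_bot_iff]
    intro y hy
    have hy' : ∀ x : H, inner ℂ (T x) y = (0:ℂ) := fun x =>
      (Submodule.mem_orthogonal _ y).mp hy (T x) (LinearMap.mem_range_self _ x)
    have h0 : T y = 0 := by
      have h2 := hTsa.isSymmetric (T y) y
      simp only [ContinuousLinearMap.coe_coe] at h2
      exact inner_self_eq_zero.mp (by rw [← h2]; exact hy' (T y))
    have hmem : y ∈ LinearMap.ker (T : H →ₗ[ℂ] H) := by simpa [LinearMap.mem_ker] using h0
    rw [hker] at hmem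
    simpa using hmem
  have hunit : IsUnit T := ContinuousLinearMap.isUnit_iff_bijective.mpr
    ⟨hanti.injective, LinearMap.range_eq_top.mp hsurj⟩
  have := spectrum.mem_iff.mp hl
  apply this
  have : algebraMap ℂ (H →L[ℂ] H) l - A = -T := by
    simp [hT, Algebra.algebraMap_eq_smul_one]
  rw [this]
  exact hunit.neg

open Classical in
lemma close_pair {s : Set ℂ} (hc : IsCompact s) (hi : s.Infinite) {ε : ℝ} (hε : 0 < ε) :
    ∃ l ∈ s, ∃ m ∈ s, l ≠ m ∧ dist l m < ε := by
  obtain ⟨t, htf, hst⟩ := (Metric.totallyBounded_iff.mp hc.totallyBounded) (ε/2) (by positivity)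
  have hch : ∀ x ∈ s, ∃ y ∈ t, x ∈ Metric.ball y (ε/2) := by
    intro x hx
    simpa using Set.mem_iUnion₂.mp (hst hx)
  choose f hf hfb using hch
  obtain ⟨x, hx, y, hy, hxy, hfeq⟩ :=
    hi.exists_ne_map_eq_of_mapsTo (f := fun x => if h : x ∈ s then f x h else 0)
      (fun x hx => by simp [hx, hf x hx]) htf
  refine ⟨x, hx, y, hy, hxy, ?_⟩
  rw [dif_pos hx, dif_pos hy] at hfeq
  have h1 := Metric.mem_ball.mp (hfb x hx)
  have h2 := Metric.mem_ball.mp (hfb y hy)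
  rw [hfeq] at h1
  calc dist x y ≤ dist x (f y hy) + dist (f y hy) y := dist_triangle _ _ _
    _ < ε/2 + ε/2 := by rw [dist_comm (f y hy) y]; exact add_lt_add h1 h2
    _ = ε := by ring


/-- rank one operator `x ↦ ⟪v, x⟫ • u`. -/
def rk (u v : H) : H →L[ℂ] H := (innerSL ℂ v).smulRight u

@[simp] lemma rk_apply (u v x : H) : rk u v x = (inner ℂ v x : ℂ) • u := rfl

lemma norm_rk_le (u v : H) : ‖rk u v‖ ≤ ‖v‖ * ‖u‖ := by
  refine opNorm_le_bound _ (by positivity) fun x => ?_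
  rw [rk_apply, norm_smul]
  calc ‖(inner ℂ v x : ℂ)‖ * ‖u‖ ≤ ‖v‖ * ‖x‖ * ‖u‖ :=
        mul_le_mul_of_nonneg_right (norm_inner_le_norm v x) (norm_nonneg u)
    _ = ‖v‖ * ‖u‖ * ‖x‖ := by ring

lemma isCompact_rk (u v : H) : IsCompactOperator ⇑(rk u v) := by
  have h : IsCompactOperator (fun z : ℂ => z • u) := by
    refine ⟨(fun z : ℂ => z • u) '' Metric.closedBall 0 1,
      ((isCompact_closedBall 0 1).image (by continuity)), ?_⟩
    have : Metric.ball (0:ℂ) 1 ⊆ (fun z : ℂ => z • u) ⁻¹' ((fun z : ℂ => z • u) '' Metric.closedBall 0 1) :=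
      fun z hz => Set.mem_preimage.mpr (Set.mem_image_of_mem _ (Metric.ball_subset_closedBall hz))
    exact Filter.mem_of_superset (Metric.ball_mem_nhds 0 one_pos) this
  have : ⇑(rk u v) = (fun z : ℂ => z • u) ∘ ⇑(innerSL ℂ v) := rfl
  rw [this]
  exact h.comp_clm (innerSL ℂ v)

lemma star_rk (u v : H) : star (rk u v) = rk v u := by
  rw [star_eq_adjoint]
  symm
  rw [eq_adjoint_iff]
  intro x y
  simp [inner_smul_left, inner_smul_right, mul_comm]

lemma rk_mul (u v : H) (A : H →L[ℂ] H) (hA : star A = A) : rk u v * A = rk u (A v) := by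
  ext x
  have h : (inner ℂ (A v) x : ℂ) = inner ℂ v (A x) := by
    rw [← ContinuousLinearMap.adjoint_inner_left, ← star_eq_adjoint, hA]
  simp [ContinuousLinearMap.mul_apply, h]

lemma mul_rk (u v : H) (A : H →L[ℂ] H) : A * rk u v = rk (A u) v := by
  ext x
  simp [ContinuousLinearMap.mul_apply]

end Aux

/-- The inner derivation `δ_A(x) = xA - Ax`, as a real-linear map. -/
def deltaMap (A : H →L[ℂ] H) : (H →L[ℂ] H) →ₗ[ℝ] (H →L[ℂ] H) where
  toFun x := x * A - A * x
  map_add' x y := by noncomm_ring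
  map_smul' c x := by simp [smul_sub, smul_mul_assoc, mul_smul_comm]


section Aux2
set_option linter.unusedSectionVars false
open ContinuousLinearMap Complex

variable {H : Type*} [NormedAddCommGroup H] [InnerProductSpace ℂ H] [CompleteSpace H]

@[simp] lemma rk_add_right (u v w : H) : rk u (v + w) = rk u v + rk u w := by
  ext x; simp [inner_add_left, add_smul]

@[simp] lemma rk_smul_right (u v : H) (c : ℂ) :
    rk u (c • v) = (starRingEnd ℂ) c • rk u v := by
  ext x; simp [inner_smul_left, smul_smul, mul_comm]

@[simp] lemma rk_add_left (u v w : H) : rk (u + w) v = rk u v + rk w v := by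
  ext x; simp [smul_add]

@[simp] lemma rk_smul_left (u v : H) (c : ℂ) : rk (c • u) v = c • rk u v := by
  ext x; simp [smul_smul, mul_comm]

lemma deltaMap_apply (A x : H →L[ℂ] H) : deltaMap A x = x * A - A * x := rfl

lemma continuous_deltaMap (A : H →L[ℂ] H) : Continuous (deltaMap A) := by
  have : (deltaMap A : (H →L[ℂ] H) → (H →L[ℂ] H)) = fun x => x * A - A * x := rfl
  rw [this]
  exact (continuous_id.mul continuous_const).sub (continuous_const.mul continuous_id)

lemma isClosed_Kah : IsClosed ((Kah H : Set (H →L[ℂ] H))) := by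
  have : (Kah H : Set (H →L[ℂ] H)) =
      {x : H →L[ℂ] H | IsCompactOperator ⇑x} ∩ {x | star x = -x} := rfl
  rw [this]
  exact isClosed_setOf_isCompactOperator.inter (isClosed_eq continuous_star continuous_neg)

lemma isClosed_Kh : IsClosed ((Kh H : Set (H →L[ℂ] H))) := by
  have : (Kh H : Set (H →L[ℂ] H)) =
      {x : H →L[ℂ] H | IsCompactOperator ⇑x} ∩ {x | star x = x} := rfl
  rw [this]
  exact isClosed_setOf_isCompactOperator.inter (isClosed_eq continuous_star continuous_id)

lemma open_mapping_delta (A : H →L[ℂ] H)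
    (hcl : IsClosed ((Submodule.map (deltaMap A) (Kah H) : Submodule ℝ (H →L[ℂ] H)) :
      Set (H →L[ℂ] H))) :
    ∃ C : ℝ, 0 < C ∧ ∀ x ∈ Kah H, ∃ z ∈ Kah H,
      deltaMap A z = deltaMap A x ∧ ‖z‖ ≤ C * ‖deltaMap A x‖ := by
  haveI : CompleteSpace (Kah H) := isClosed_Kah.completeSpace_coe
  set R : Submodule ℝ (H →L[ℂ] H) := Submodule.map (deltaMap A) (Kah H) with hR
  haveI : CompleteSpace R := hcl.completeSpace_coe
  have hmem : ∀ x : Kah H, deltaMap A (x : H →L[ℂ] H) ∈ R :=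
    fun x => Submodule.mem_map_of_mem x.2
  let F : (Kah H) →L[ℝ] R :=
    { toFun := fun x => ⟨deltaMap A (x : H →L[ℂ] H), hmem x⟩
      map_add' := by intro x y; apply Subtype.ext; simp
      map_smul' := by intro c x; apply Subtype.ext; simp
      cont := by
        apply Continuous.subtype_mk
        exact (continuous_deltaMap A).comp continuous_subtype_val }
  have hsurj : Function.Surjective F := by
    rintro ⟨y, hy⟩
    obtain ⟨x, hx, rfl⟩ := hy
    exact ⟨⟨x, hx⟩, rfl⟩
  obtain ⟨C, hC0, hC⟩ := ContinuousLinearMap.exists_preimage_norm_le F hsurj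
  refine ⟨C, hC0, fun x hx => ?_⟩
  obtain ⟨z, hz, hnorm⟩ := hC ⟨deltaMap A x, Submodule.mem_map_of_mem hx⟩
  refine ⟨(z : H →L[ℂ] H), z.2, congrArg Subtype.val hz, by simpa using hnorm⟩

lemma key_inner (A : H →L[ℂ] H) (hA : star A = A) {l m : ℂ}
    (hl : (starRingEnd ℂ) l = l) (k : H →L[ℂ] H) (hk : k * A = A * k) (ξ η : H) :
    (l - m) * (inner ℂ ξ (k η) : ℂ) =
      inner ℂ ξ (k (A η - m • η)) - (inner ℂ (A ξ - l • ξ) (k η) : ℂ) := by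
  have hsym : ∀ u w : H, (inner ℂ (A u) w : ℂ) = inner ℂ u (A w) := fun u w => by
    rw [← ContinuousLinearMap.adjoint_inner_left, ← star_eq_adjoint, hA]
  have hkA : k (A η) = A (k η) := by
    have := congrArg (fun T : H →L[ℂ] H => T η) hk
    simpa [ContinuousLinearMap.mul_apply] using this
  have h1 : (inner ℂ ξ (k (A η)) : ℂ) = inner ℂ (A ξ) (k η) := by
    rw [hkA, ← hsym ξ (k η)]
  rw [map_sub, map_smul]
  simp only [inner_sub_right, inner_sub_left, inner_smul_left, inner_smul_right, h1, hl]
  ring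

lemma not_isClosed_of_infinite (A : H →L[ℂ] H) (hA : star A = A)
    (hinf : (spectrum ℂ A).Infinite) :
    ¬ IsClosed ((Submodule.map (deltaMap A) (Kah H) : Submodule ℝ (H →L[ℂ] H)) :
      Set (H →L[ℂ] H)) := by
  intro hcl
  obtain ⟨C, hC0, hC⟩ := open_mapping_delta A hcl
  set ε : ℝ := 1 / (10 * C) with hε
  have hε0 : 0 < ε := by positivity
  obtain ⟨l, hl, m, hm, hlm, hdist⟩ := close_pair (spectrum.isCompact A) hinf hε0
  set d : ℝ := ‖l - m‖ with hdd
  have hd0 : 0 < d := by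
    rw [hdd, norm_pos_iff]
    exact sub_ne_zero.mpr hlm
  have hdε : d < ε := by rwa [Complex.dist_eq] at hdist
  set τ : ℝ := d / 8 with hτ
  have hτ0 : 0 < τ := by positivity
  obtain ⟨ξ, hξ1, hξ⟩ := approx_eig A hA hl hτ0
  obtain ⟨η, hη1, hη⟩ := approx_eig A hA hm hτ0
  have hlre : (starRingEnd ℂ) l = l :=
    Complex.conj_eq_iff_im.mpr ((IsSelfAdjoint.im_eq_zero_of_mem_spectrum hA hl))
  have hmre : (starRingEnd ℂ) m = m :=
    Complex.conj_eq_iff_im.mpr ((IsSelfAdjoint.im_eq_zero_of_mem_spectrum hA hm))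
  set rξ : H := A ξ - l • ξ with hrξ
  set rη : H := A η - m • η with hrη
  set x : H →L[ℂ] H := rk ξ η - rk η ξ with hx
  have hxK : x ∈ Kah H := by
    constructor
    · have : ⇑x = ⇑(rk ξ η) - ⇑(rk η ξ) := by rw [hx]; rfl
      rw [this]
      exact (isCompact_rk ξ η).sub (isCompact_rk η ξ)
    · rw [hx, star_sub, star_rk, star_rk, neg_sub]
  have hAξ : A ξ = l • ξ + rξ := by rw [hrξ]; abel
  have hAη : A η = m • η + rη := by rw [hrη]; abel
  -- expression for delta x
  have hδx : deltaMap A x = (m - l) • (rk ξ η + rk η ξ) +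
      ((rk ξ rη - rk η rξ) - rk rξ η + rk rη ξ) := by
    rw [deltaMap_apply, hx, sub_mul, mul_sub, rk_mul _ _ _ hA, rk_mul _ _ _ hA,
      mul_rk, mul_rk, hAξ, hAη]
    simp only [rk_add_right, rk_smul_right, rk_add_left, rk_smul_left, hlre, hmre]
    module
  have hb1 : ‖rk ξ η‖ ≤ 1 := by simpa [hξ1, hη1] using norm_rk_le ξ η
  have hb2 : ‖rk η ξ‖ ≤ 1 := by simpa [hξ1, hη1] using norm_rk_le η ξ
  have hbr1 : ‖rk ξ rη‖ ≤ τ := by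
    have := norm_rk_le ξ rη
    rw [hξ1, mul_one] at this
    exact this.trans hη.le
  have hbr2 : ‖rk η rξ‖ ≤ τ := by
    have := norm_rk_le η rξ
    rw [hη1, mul_one] at this
    exact this.trans hξ.le
  have hbr3 : ‖rk rξ η‖ ≤ τ := by
    have := norm_rk_le rξ η
    rw [hη1, one_mul] at this
    exact this.trans hξ.le
  have hbr4 : ‖rk rη ξ‖ ≤ τ := by
    have := norm_rk_le rη ξ
    rw [hξ1, one_mul] at this
    exact this.trans hη.le
  have hml : ‖m - l‖ = d := by rw [hdd, norm_sub_rev]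
  have hδxnorm : ‖deltaMap A x‖ ≤ 5 / 2 * d := by
    rw [hδx]
    have e1 : ‖(m - l) • (rk ξ η + rk η ξ)‖ ≤ d * 2 := by
      rw [norm_smul, hml]
      have := (norm_add_le (rk ξ η) (rk η ξ)).trans (add_le_add hb1 hb2)
      nlinarith
    have e2 : ‖(rk ξ rη - rk η rξ) - rk rξ η + rk rη ξ‖ ≤ 4 * τ := by
      calc ‖(rk ξ rη - rk η rξ) - rk rξ η + rk rη ξ‖
          ≤ ‖(rk ξ rη - rk η rξ) - rk rξ η‖ + ‖rk rη ξ‖ := norm_add_le _ _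
        _ ≤ ‖rk ξ rη - rk η rξ‖ + ‖rk rξ η‖ + ‖rk rη ξ‖ := by
            have := norm_sub_le (rk ξ rη - rk η rξ) (rk rξ η)
            linarith
        _ ≤ ‖rk ξ rη‖ + ‖rk η rξ‖ + ‖rk rξ η‖ + ‖rk rη ξ‖ := by
            have := norm_sub_le (rk ξ rη) (rk η rξ)
            linarith
        _ ≤ 4 * τ := by linarith
    calc ‖(m - l) • (rk ξ η + rk η ξ) + ((rk ξ rη - rk η rξ) - rk rξ η + rk rη ξ)‖
        ≤ ‖(m - l) • (rk ξ η + rk η ξ)‖ + ‖(rk ξ rη - rk η rξ) - rk rξ η + rk rη ξ‖ :=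
          norm_add_le _ _
      _ ≤ d * 2 + 4 * τ := add_le_add e1 e2
      _ = 5 / 2 * d := by rw [hτ]; ring
  obtain ⟨z, hzK, hzδ, hznorm⟩ := hC x hxK
  have hz14 : ‖z‖ ≤ 1 / 4 := by
    have h1 : ‖z‖ ≤ C * (5 / 2 * d) := hznorm.trans (by nlinarith)
    have h2 : C * (5 / 2 * d) ≤ C * (5 / 2 * ε) := by nlinarith
    have h3 : C * (5 / 2 * ε) = 1 / 4 := by
      rw [hε]; field_simp; ring
    linarith
  set k : H →L[ℂ] H := x - z with hk
  have hkcomm : k * A = A * k := by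
    have h0 : deltaMap A k = 0 := by
      rw [hk, map_sub, hzδ, sub_self]
    have := h0
    rw [deltaMap_apply, sub_eq_zero] at this
    exact this
  have hknorm : ‖k‖ ≤ 9 / 4 := by
    have hxnorm : ‖x‖ ≤ 2 := by
      rw [hx]
      have := norm_sub_le (rk ξ η) (rk η ξ)
      linarith
    have := norm_sub_le x z
    rw [← hk] at this
    linarith
  -- inner product estimates
  have hinner_k : ‖(inner ℂ ξ (k η) : ℂ)‖ ≤ 9 / 16 := by
    have hid := key_inner A hA (m := m) hlre k hkcomm ξ η
    rw [← hrξ, ← hrη] at hid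
    have hnorm_rhs : ‖(inner ℂ ξ (k rη) : ℂ) - (inner ℂ rξ (k η) : ℂ)‖ ≤ 2 * τ * ‖k‖ := by
      have e1 : ‖(inner ℂ ξ (k rη) : ℂ)‖ ≤ τ * ‖k‖ := by
        calc ‖(inner ℂ ξ (k rη) : ℂ)‖ ≤ ‖ξ‖ * ‖k rη‖ := norm_inner_le_norm _ _
          _ ≤ 1 * (‖k‖ * ‖rη‖) := by rw [hξ1]; exact mul_le_mul_of_nonneg_left (k.le_opNorm rη) one_pos.le
          _ = ‖k‖ * ‖rη‖ := one_mul _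
          _ ≤ ‖k‖ * τ := mul_le_mul_of_nonneg_left hη.le (norm_nonneg k)
          _ = τ * ‖k‖ := mul_comm _ _
      have e2 : ‖(inner ℂ rξ (k η) : ℂ)‖ ≤ τ * ‖k‖ := by
        calc ‖(inner ℂ rξ (k η) : ℂ)‖ ≤ ‖rξ‖ * ‖k η‖ := norm_inner_le_norm _ _
          _ ≤ τ * (‖k‖ * ‖η‖) := by
              apply mul_le_mul hξ.le (k.le_opNorm η) (norm_nonneg _) hτ0.le
          _ = τ * ‖k‖ := by rw [hη1, mul_one]
      calc ‖(inner ℂ ξ (k rη) : ℂ) - (inner ℂ rξ (k η) : ℂ)‖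
          ≤ ‖(inner ℂ ξ (k rη) : ℂ)‖ + ‖(inner ℂ rξ (k η) : ℂ)‖ := norm_sub_le _ _
        _ ≤ 2 * τ * ‖k‖ := by linarith
    have hld : ‖l - m‖ * ‖(inner ℂ ξ (k η) : ℂ)‖ ≤ 2 * τ * ‖k‖ := by
      rw [← norm_mul, hid]
      exact hnorm_rhs
    rw [← hdd] at hld
    have : ‖(inner ℂ ξ (k η) : ℂ)‖ ≤ 2 * τ * ‖k‖ / d := by
      rw [le_div_iff₀ hd0]
      linarith [mul_comm (‖(inner ℂ ξ (k η) : ℂ)‖) d]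
    have h9 : 2 * τ * ‖k‖ / d ≤ 9 / 16 := by
      rw [hτ]
      rw [div_le_iff₀ hd0]
      nlinarith
    linarith
  have hinner_ξη : ‖(inner ℂ ξ η : ℂ)‖ ≤ 1 / 4 := by
    have hid := key_inner A hA (m := m) hlre 1 (by rw [one_mul, mul_one]) ξ η
    simp only [ContinuousLinearMap.one_apply] at hid
    rw [← hrξ, ← hrη] at hid
    have hnorm_rhs : ‖(inner ℂ ξ rη : ℂ) - (inner ℂ rξ η : ℂ)‖ ≤ 2 * τ := by
      have e1 : ‖(inner ℂ ξ rη : ℂ)‖ ≤ τ := by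
        calc ‖(inner ℂ ξ rη : ℂ)‖ ≤ ‖ξ‖ * ‖rη‖ := norm_inner_le_norm _ _
          _ ≤ τ := by rw [hξ1, one_mul]; exact hη.le
      have e2 : ‖(inner ℂ rξ η : ℂ)‖ ≤ τ := by
        calc ‖(inner ℂ rξ η : ℂ)‖ ≤ ‖rξ‖ * ‖η‖ := norm_inner_le_norm _ _
          _ ≤ τ := by rw [hη1, mul_one]; exact hξ.le
      calc ‖(inner ℂ ξ rη : ℂ) - (inner ℂ rξ η : ℂ)‖
          ≤ ‖(inner ℂ ξ rη : ℂ)‖ + ‖(inner ℂ rξ η : ℂ)‖ := norm_sub_le _ _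
        _ ≤ 2 * τ := by linarith
    have hld : d * ‖(inner ℂ ξ η : ℂ)‖ ≤ 2 * τ := by
      rw [hdd, ← norm_mul, hid]
      exact hnorm_rhs
    have : ‖(inner ℂ ξ η : ℂ)‖ ≤ 2 * τ / d := by
      rw [le_div_iff₀ hd0]
      linarith [mul_comm (‖(inner ℂ ξ η : ℂ)‖) d]
    have : 2 * τ / d = 1 / 4 := by
      rw [hτ]; field_simp; ring
    linarith
  -- lower bound for inner ξ (x η)
  have hxη : x η = ξ - (inner ℂ ξ η : ℂ) • η := by
    rw [hx]
    simp only [ContinuousLinearMap.sub_apply, rk_apply]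
    rw [inner_self_eq_norm_sq_to_K (𝕜 := ℂ) η, hη1]
    norm_num
  have hinner_x : (inner ℂ ξ (x η) : ℂ) = 1 - (inner ℂ ξ η : ℂ) * (inner ℂ ξ η : ℂ) := by
    rw [hxη, inner_sub_right, inner_smul_right]
    rw [inner_self_eq_norm_sq_to_K (𝕜 := ℂ) ξ, hξ1]
    norm_num
  have hlow : (15 : ℝ) / 16 ≤ ‖(inner ℂ ξ (x η) : ℂ)‖ := by
    rw [hinner_x]
    have h1 : ‖(inner ℂ ξ η : ℂ) * (inner ℂ ξ η : ℂ)‖ ≤ 1 / 16 := by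
      rw [norm_mul]
      nlinarith [norm_nonneg (inner ℂ ξ η : ℂ)]
    have := norm_sub_norm_le (1 : ℂ) ((inner ℂ ξ η : ℂ) * (inner ℂ ξ η : ℂ))
    rw [norm_one] at this
    linarith
  -- upper bound
  have hup : ‖(inner ℂ ξ (x η) : ℂ)‖ ≤ 13 / 16 := by
    have hsplit : (inner ℂ ξ (x η) : ℂ) = inner ℂ ξ (k η) + inner ℂ ξ (z η) := by
      rw [hk]
      simp only [ContinuousLinearMap.sub_apply, inner_sub_right]
      ring
    rw [hsplit]
    have e1 : ‖(inner ℂ ξ (z η) : ℂ)‖ ≤ 1 / 4 := by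
      calc ‖(inner ℂ ξ (z η) : ℂ)‖ ≤ ‖ξ‖ * ‖z η‖ := norm_inner_le_norm _ _
        _ ≤ 1 * (‖z‖ * ‖η‖) := by
            rw [hξ1]; exact mul_le_mul_of_nonneg_left (z.le_opNorm η) one_pos.le
        _ = ‖z‖ := by rw [hη1, mul_one, one_mul]
        _ ≤ 1 / 4 := hz14
    calc ‖(inner ℂ ξ (k η) : ℂ) + (inner ℂ ξ (z η) : ℂ)‖
        ≤ ‖(inner ℂ ξ (k η) : ℂ)‖ + ‖(inner ℂ ξ (z η) : ℂ)‖ := norm_add_le _ _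
      _ ≤ 13 / 16 := by linarith
  linarith

end Aux2


section PartB
set_option linter.unusedSectionVars false
open Complex Polynomial
variable {H : Type*} [NormedAddCommGroup H] [InnerProductSpace ℂ H] [CompleteSpace H]

lemma star_aeval (A : H →L[ℂ] H) (hA : star A = A) (p : Polynomial ℂ) :
    star (Polynomial.aeval A p) = Polynomial.aeval A (p.map (starRingEnd ℂ)) := by
  induction p using Polynomial.induction_on' with
  | add p q hp hq => rw [map_add, star_add, hp, hq, Polynomial.map_add, map_add]
  | monomial n c =>
    rw [Polynomial.map_monomial, Polynomial.aeval_monomial, Polynomial.aeval_monomial,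
      star_mul, star_pow, hA, ← algebraMap_star_comm]
    exact (Algebra.commutes _ _).symm

lemma nodal_dvd_of_root {t : Finset ℂ} {p : Polynomial ℂ}
    (h : ∀ l ∈ t, Polynomial.eval l p = 0) : Lagrange.nodal t id ∣ p := by
  rw [Lagrange.nodal_eq]
  refine Finset.prod_dvd_of_coprime ?_ fun l hl =>
    Polynomial.dvd_iff_isRoot.mpr (by simpa using h l hl)
  intro a ha b hb hab
  exact Polynomial.pairwise_coprime_X_sub_C (Function.injective_id) hab

lemma commute_aeval {x A : H →L[ℂ] H} (h : x * A = A * x) (p : Polynomial ℂ) :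
    x * Polynomial.aeval A p = Polynomial.aeval A p * x := by
  have hc : Commute x A := h
  induction p using Polynomial.induction_on' with
  | add p q hp hq => rw [map_add, mul_add, add_mul, hp, hq]
  | monomial n c =>
    rw [Polynomial.aeval_monomial]
    exact (Commute.mul_right (((Algebra.commutes c x).symm : x * _ = _) :
      Commute x ((algebraMap ℂ (H →L[ℂ] H)) c)) (hc.pow_right n))

lemma spectral_decomp (A : H →L[ℂ] H) (hA : star A = A) (hfin : (spectrum ℂ A).Finite)
    [Nontrivial (H →L[ℂ] H)] :
    ∃ (t : Finset ℂ) (P : ℂ → (H →L[ℂ] H)),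
      (∀ l ∈ t, (starRingEnd ℂ) l = l) ∧
      (∀ l ∈ t, ∀ l' ∈ t, P l * P l' = if l = l' then P l else 0) ∧
      (∑ l ∈ t, P l) = 1 ∧
      (∀ l ∈ t, star (P l) = P l) ∧
      (∀ l ∈ t, A * P l = l • P l) ∧
      (∀ l ∈ t, P l * A = l • P l) ∧
      (∀ x : H →L[ℂ] H, x * A = A * x → ∀ l ∈ t, x * P l = P l * x) := by
  classical
  set t : Finset ℂ := hfin.toFinset with htdef
  have hmem_t : ∀ l, l ∈ t ↔ l ∈ spectrum ℂ A := fun l => Set.Finite.mem_toFinset hfin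
  have hre : ∀ l ∈ t, (starRingEnd ℂ) l = l := fun l hl =>
    Complex.conj_eq_iff_im.mpr
      (IsSelfAdjoint.im_eq_zero_of_mem_spectrum hA ((hmem_t l).mp hl))
  have hinj : Set.InjOn id (t : Set ℂ) := fun a _ b _ h => h
  have tne : t.Nonempty := by
    obtain ⟨k, hk⟩ := spectrum.nonempty A
    exact ⟨k, (hmem_t k).mpr hk⟩
  set N : H →L[ℂ] H := Polynomial.aeval A (Lagrange.nodal t id) with hN
  have hspecN : spectrum ℂ N ⊆ {0} := by
    rw [hN, spectrum.map_polynomial_aeval A (Lagrange.nodal t id)]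
    rintro - ⟨k, hk, rfl⟩
    have : Polynomial.eval (id k) (Lagrange.nodal t id) = 0 :=
      Lagrange.eval_nodal_at_node ((hmem_t k).mpr hk)
    simpa using this
  have hNsa : IsSelfAdjoint N := by
    rw [IsSelfAdjoint, hN, star_aeval A hA]
    congr 1
    rw [Lagrange.nodal_eq, Polynomial.map_prod]
    apply Finset.prod_congr rfl
    intro l hl
    rw [Polynomial.map_sub, Polynomial.map_X, Polynomial.map_C]
    simp only [id_eq]
    rw [hre l hl]
  have hrad : spectralRadius ℂ N = 0 := by
    apply le_antisymm _ (by simp)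
    apply iSup₂_le
    intro k hk
    have : k = 0 := hspecN hk
    simp [this]
  have hN0 : N = 0 := by
    have h2 := hNsa.spectralRadius_eq_nnnorm
    rw [hrad] at h2
    have h3 : ‖N‖₊ = 0 := by exact_mod_cast h2.symm
    simpa using h3
  have hdvd0 : ∀ p : Polynomial ℂ, (∀ l ∈ t, Polynomial.eval l p = 0) →
      Polynomial.aeval A p = 0 := by
    intro p hp
    obtain ⟨q, hq⟩ := nodal_dvd_of_root hp
    rw [hq, map_mul, ← hN, hN0, zero_mul]
  set P : ℂ → (H →L[ℂ] H) := fun l => Polynomial.aeval A (Lagrange.basis t id l) with hP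
  have hPP : ∀ l ∈ t, ∀ l' ∈ t, P l * P l' = if l = l' then P l else 0 := by
    intro l hl l' hl'
    by_cases h : l = l'
    · subst h
      rw [if_pos rfl]
      have h0 : Polynomial.aeval A
          (Lagrange.basis t id l * Lagrange.basis t id l - Lagrange.basis t id l) = 0 := by
        apply hdvd0
        intro j hj
        by_cases hjl : j = l
        · subst hjl
          have h1 : Polynomial.eval (id j) (Lagrange.basis t id j) = 1 :=
            Lagrange.eval_basis_self hinj hj
          simp only [id_eq] at h1
          simp [h1]
        · have h1 : Polynomial.eval (id j) (Lagrange.basis t id l) = 0 :=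
            Lagrange.eval_basis_of_ne (fun hh => hjl hh.symm) hj
          simp only [id_eq] at h1
          simp [h1]
      rw [map_sub, map_mul, sub_eq_zero] at h0
      exact h0
    · rw [if_neg h, hP, ← map_mul]
      apply hdvd0
      intro j hj
      rw [Polynomial.eval_mul]
      by_cases hjl : j = l
      · subst hjl
        have h1 : Polynomial.eval (id j) (Lagrange.basis t id l') = 0 :=
          Lagrange.eval_basis_of_ne (fun hh => h (hh.symm ▸ rfl)) hj
        simp only [id_eq] at h1
        rw [h1, mul_zero]
      · have h1 : Polynomial.eval (id j) (Lagrange.basis t id l) = 0 :=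
          Lagrange.eval_basis_of_ne (fun hh => hjl hh.symm) hj
        simp only [id_eq] at h1
        rw [h1, zero_mul]
  have hsumP : (∑ l ∈ t, P l) = 1 := by
    rw [hP]
    simp only
    rw [← map_sum, Lagrange.sum_basis hinj tne, map_one]
  have hAsum : A = ∑ l ∈ t, l • P l := by
    have h0 : Polynomial.aeval A
        (Polynomial.X - ∑ l ∈ t, Polynomial.C l * Lagrange.basis t id l) = 0 := by
      apply hdvd0
      intro j hj
      rw [Polynomial.eval_sub, Polynomial.eval_X, Polynomial.eval_finset_sum]
      rw [Finset.sum_eq_single j]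
      · have h1 : Polynomial.eval (id j) (Lagrange.basis t id j) = 1 :=
          Lagrange.eval_basis_self hinj hj
        simp only [id_eq] at h1
        rw [Polynomial.eval_mul, Polynomial.eval_C, h1, mul_one, sub_self]
      · intro b hb hbj
        have h1 : Polynomial.eval (id j) (Lagrange.basis t id b) = 0 :=
          Lagrange.eval_basis_of_ne hbj hj
        simp only [id_eq] at h1
        rw [Polynomial.eval_mul, h1, mul_zero]
      · intro hjt
        exact absurd hj hjt
    rw [map_sub, Polynomial.aeval_X, map_sum, sub_eq_zero] at h0
    rw [h0]
    apply Finset.sum_congr rfl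
    intro l hl
    rw [map_mul, Polynomial.aeval_C, ← Algebra.smul_def]
  have hPstar : ∀ l ∈ t, star (P l) = P l := by
    intro l hl
    rw [hP]
    simp only
    rw [star_aeval A hA]
    congr 1
    rw [Lagrange.basis, Polynomial.map_prod]
    apply Finset.prod_congr rfl
    intro j hj
    rw [Lagrange.basisDivisor, Polynomial.map_mul, Polynomial.map_C, Polynomial.map_sub,
      Polynomial.map_X, Polynomial.map_C, map_inv₀, map_sub]
    simp only [id_eq]
    rw [hre l hl, hre j (Finset.mem_of_mem_erase hj)]
  have hAP : ∀ l ∈ t, A * P l = l • P l := by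
    intro l hl
    have h1 : A * P l = ∑ l' ∈ t, l' • (P l' * P l) := by
      rw [hAsum, Finset.sum_mul]
      apply Finset.sum_congr rfl
      intro l' _
      rw [smul_mul_assoc]
    rw [h1, Finset.sum_eq_single l]
    · rw [hPP l hl l hl, if_pos rfl]
    · intro b hb hbl
      rw [hPP b hb l hl, if_neg hbl, smul_zero]
    · intro hlt
      exact absurd hl hlt
  have hPA : ∀ l ∈ t, P l * A = l • P l := by
    intro l hl
    have h1 : P l * A = ∑ l' ∈ t, l' • (P l * P l') := by
      rw [hAsum, Finset.mul_sum]
      apply Finset.sum_congr rfl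
      intro l' _
      rw [mul_smul_comm]
    rw [h1, Finset.sum_eq_single l]
    · rw [hPP l hl l hl, if_pos rfl]
    · intro b hb hbl
      rw [hPP l hl b hb, if_neg (fun hh => hbl hh.symm), smul_zero]
    · intro hlt
      exact absurd hl hlt
  exact ⟨t, P, hre, hPP, hsumP, hPstar, hAP, hPA,
    fun x hx l _ => commute_aeval hx (Lagrange.basis t id l)⟩

lemma partB (A : H →L[ℂ] H) (hA : star A = A) (hfin : (spectrum ℂ A).Finite) :
    (IsClosed ((Kah H ⊓ LinearMap.ker (deltaMap A) : Submodule ℝ (H →L[ℂ] H)) :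
        Set (H →L[ℂ] H)) ∧
      ∃ S : Submodule ℝ (H →L[ℂ] H), S ≤ Kah H ∧ IsClosed (S : Set (H →L[ℂ] H)) ∧
        S ⊓ (Kah H ⊓ LinearMap.ker (deltaMap A)) = ⊥ ∧
        S ⊔ (Kah H ⊓ LinearMap.ker (deltaMap A)) = Kah H) ∧
    (IsClosed ((Submodule.map (deltaMap A) (Kah H) : Submodule ℝ (H →L[ℂ] H)) :
        Set (H →L[ℂ] H)) ∧
      ∃ T : Submodule ℝ (H →L[ℂ] H), T ≤ Kh H ∧ IsClosed (T : Set (H →L[ℂ] H)) ∧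
        T ⊓ Submodule.map (deltaMap A) (Kah H) = ⊥ ∧
        T ⊔ Submodule.map (deltaMap A) (Kah H) = Kh H) := by
  classical
  have hker_closed : IsClosed ((Kah H ⊓ LinearMap.ker (deltaMap A) :
      Submodule ℝ (H →L[ℂ] H)) : Set (H →L[ℂ] H)) := by
    have hset : ((Kah H ⊓ LinearMap.ker (deltaMap A) : Submodule ℝ (H →L[ℂ] H)) :
        Set (H →L[ℂ] H)) = (Kah H : Set (H →L[ℂ] H)) ∩ {x | deltaMap A x = 0} := by
      ext x
      simp [Submodule.mem_inf, LinearMap.mem_ker]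
    rw [hset]
    exact isClosed_Kah.inter (isClosed_eq (continuous_deltaMap A) continuous_const)
  rcases subsingleton_or_nontrivial (H →L[ℂ] H) with hss | hnt
  · -- degenerate case
    have hsub : ∀ p q : Submodule ℝ (H →L[ℂ] H), p = q := by
      intro p q
      ext x
      rw [Subsingleton.elim x (0 : H →L[ℂ] H)]
      simp
    have hclosed : ∀ p : Submodule ℝ (H →L[ℂ] H), IsClosed (p : Set (H →L[ℂ] H)) := by
      intro p
      have : Finite (H →L[ℂ] H) := Finite.of_subsingleton
      exact (Set.toFinite _).isClosed
    exact ⟨⟨hker_closed, ⊥, bot_le, hclosed ⊥, by rw [bot_inf_eq],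
        by rw [bot_sup_eq]; exact hsub _ _⟩,
      ⟨hclosed _, ⊥, bot_le, hclosed ⊥, by rw [bot_inf_eq],
        by rw [bot_sup_eq]; exact hsub _ _⟩⟩
  · obtain ⟨t, P, hre, hPP, hsumP, hPstar, hAP, hPA, hcommP⟩ := spectral_decomp A hA hfin
    set EL : (H →L[ℂ] H) →ₗ[ℝ] (H →L[ℂ] H) :=
      { toFun := fun x => ∑ l ∈ t, P l * x * P l
        map_add' := by
          intro x y
          rw [← Finset.sum_add_distrib]
          apply Finset.sum_congr rfl
          intro l _
          rw [mul_add, add_mul]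
        map_smul' := by
          intro c x
          rw [RingHom.id_apply, Finset.smul_sum]
          apply Finset.sum_congr rfl
          intro l _
          rw [mul_smul_comm, smul_mul_assoc] } with hEL
    have hELapply : ∀ x, EL x = ∑ l ∈ t, P l * x * P l := fun _ => rfl
    have hELcont : Continuous EL := by
      show Continuous fun x => ∑ l ∈ t, P l * x * P l
      apply continuous_finset_sum
      intro l _
      exact (continuous_const.mul continuous_id).mul continuous_const
    have hPP_key : ∀ x : H →L[ℂ] H, ∀ l ∈ t, ∀ l' ∈ t,
        P l * (P l' * x * P l') * P l = if l' = l then P l * x * P l else 0 := by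
      intro x l hl l' hl'
      by_cases h : l' = l
      · subst h
        rw [if_pos rfl]
        have h1 : P l' * (P l' * x * P l') * P l' = (P l' * P l') * x * (P l' * P l') := by
          noncomm_ring
        rw [h1, hPP l' hl' l' hl', if_pos rfl]
      · rw [if_neg h]
        have h1 : P l * (P l' * x * P l') * P l = (P l * P l') * (x * P l') * P l := by
          noncomm_ring
        rw [h1, hPP l hl l' hl', if_neg (fun hh => h hh.symm), zero_mul, zero_mul]
    have hELidem : ∀ x, EL (EL x) = EL x := by
      intro x
      have h1 : EL (EL x) = ∑ l ∈ t, ∑ l' ∈ t, P l * (P l' * x * P l') * P l := by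
        rw [hELapply (EL x)]
        apply Finset.sum_congr rfl
        intro l _
        rw [hELapply x, Finset.mul_sum, Finset.sum_mul]
      rw [h1, hELapply]
      apply Finset.sum_congr rfl
      intro l hl
      rw [Finset.sum_eq_single l]
      · rw [hPP_key x l hl l hl, if_pos rfl]
      · intro b hb hbl
        rw [hPP_key x l hl b hb, if_neg hbl]
      · intro hlt
        exact absurd hl hlt
    have hELdelta : ∀ x, EL (deltaMap A x) = 0 := by
      intro x
      rw [hELapply]
      apply Finset.sum_eq_zero
      intro l hl
      have h1 : P l * (deltaMap A x) * P l = P l * x * (A * P l) - (P l * A) * (x * P l) := by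
        rw [deltaMap_apply]
        noncomm_ring
      rw [h1, hAP l hl, hPA l hl, mul_smul_comm, smul_mul_assoc, mul_assoc, sub_self]
    have hdeltaEL : ∀ x, deltaMap A (EL x) = 0 := by
      intro x
      rw [hELapply, map_sum]
      apply Finset.sum_eq_zero
      intro l hl
      rw [deltaMap_apply]
      have h1 : P l * x * P l * A = P l * x * (P l * A) := by rw [mul_assoc]
      have h2 : A * (P l * x * P l) = (A * P l) * (x * P l) := by
        rw [mul_assoc, mul_assoc]
      rw [h1, h2, hPA l hl, hAP l hl, mul_smul_comm, smul_mul_assoc, mul_assoc, sub_self]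
    have hELfix : ∀ x : H →L[ℂ] H, x * A = A * x → EL x = x := by
      intro x hx
      rw [hELapply]
      have h2 : ∀ l ∈ t, P l * x * P l = x * P l := by
        intro l hl
        rw [← hcommP x hx l hl, mul_assoc, hPP l hl l hl, if_pos rfl]
      rw [Finset.sum_congr rfl h2, ← Finset.mul_sum, hsumP, mul_one]
    have hELcompact : ∀ x : H →L[ℂ] H, IsCompactOperator ⇑x → IsCompactOperator ⇑(EL x) := by
      intro x hx
      rw [hELapply]
      apply Finset.sum_induction (fun l => P l * x * P l)
        (fun f : H →L[ℂ] H => IsCompactOperator ⇑f)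
      · intro a b ha hb
        have : ⇑(a + b) = ⇑a + ⇑b := by rfl
        rw [this]
        exact ha.add hb
      · simpa using (isCompactOperator_zero : IsCompactOperator (0 : H → H))
      · intro l _
        have h1 : ⇑(P l * x * P l) = ⇑(P l) ∘ (⇑x ∘ ⇑(P l)) := rfl
        rw [h1]
        exact (hx.comp_clm (P l)).clm_comp (P l)
    have hELstar : ∀ x, star (EL x) = EL (star x) := by
      intro x
      rw [hELapply, hELapply, star_sum]
      apply Finset.sum_congr rfl
      intro l hl
      rw [star_mul, star_mul, hPstar l hl, mul_assoc]
    have hELKah : ∀ x ∈ Kah H, EL x ∈ Kah H := by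
      rintro x ⟨hxc, hxa⟩
      refine ⟨hELcompact x hxc, ?_⟩
      rw [hELstar, hxa, map_neg]
    have hELKh : ∀ x ∈ Kh H, EL x ∈ Kh H := by
      rintro x ⟨hxc, hxa⟩
      refine ⟨hELcompact x hxc, ?_⟩
      rw [hELstar, hxa]
    -- the range identity
    have hrange : Submodule.map (deltaMap A) (Kah H) = Kh H ⊓ LinearMap.ker EL := by
      apply le_antisymm
      · rintro y hy
        obtain ⟨x, hx, rfl⟩ := Submodule.mem_map.mp hy
        obtain ⟨hxc, hxa⟩ := hx
        refine ⟨⟨?_, ?_⟩, LinearMap.mem_ker.mpr (hELdelta x)⟩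
        · have h1 : ⇑(deltaMap A x) = (⇑x ∘ ⇑A) - (⇑A ∘ ⇑x) := by
            rw [deltaMap_apply]
            rfl
          rw [h1]
          exact (hxc.comp_clm A).sub (hxc.clm_comp A)
        · rw [deltaMap_apply, star_sub, star_mul, star_mul, hA, hxa]
          noncomm_ring
      · rintro y ⟨⟨hyc, hys⟩, hyk⟩
        have hyE : EL y = 0 := hyk
        have hyE' : ∑ l ∈ t, P l * y * P l = 0 := by rw [← hELapply]; exact hyE
        set x : H →L[ℂ] H :=
          ∑ l ∈ t, ∑ l' ∈ t, (if l = l' then 0 else (l' - l)⁻¹) • (P l * y * P l') with hxdef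
        have hxcompact : IsCompactOperator ⇑x := by
          rw [hxdef]
          apply Finset.sum_induction _ (fun f : H →L[ℂ] H => IsCompactOperator ⇑f)
          · intro a b ha hb
            have : ⇑(a + b) = ⇑a + ⇑b := rfl
            rw [this]; exact ha.add hb
          · simpa using (isCompactOperator_zero : IsCompactOperator (0 : H → H))
          · intro l _
            apply Finset.sum_induction _ (fun f : H →L[ℂ] H => IsCompactOperator ⇑f)
            · intro a b ha hb
              have : ⇑(a + b) = ⇑a + ⇑b := rfl
              rw [this]; exact ha.add hb
            · simpa using (isCompactOperator_zero : IsCompactOperator (0 : H → H))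
            · intro l' _
              have h1 : ⇑((if l = l' then (0:ℂ) else (l' - l)⁻¹) • (P l * y * P l')) =
                  (if l = l' then (0:ℂ) else (l' - l)⁻¹) • ⇑(P l * y * P l') := rfl
              rw [h1]
              apply IsCompactOperator.smul
              have h2 : ⇑(P l * y * P l') = ⇑(P l) ∘ (⇑y ∘ ⇑(P l')) := rfl
              rw [h2]
              exact (hyc.comp_clm (P l')).clm_comp (P l)
        have hxstar : star x = -x := by
          have h1 : star x = ∑ l ∈ t, ∑ l' ∈ t,
              ((starRingEnd ℂ) (if l = l' then 0 else (l' - l)⁻¹)) • (P l' * y * P l) := by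
            rw [hxdef, star_sum]
            apply Finset.sum_congr rfl
            intro l hl
            rw [star_sum]
            apply Finset.sum_congr rfl
            intro l' hl'
            rw [star_smul, star_mul, star_mul, hPstar l hl, hPstar l' hl', hys, mul_assoc]
            rfl
          rw [h1, Finset.sum_comm, hxdef, ← Finset.sum_neg_distrib]
          apply Finset.sum_congr rfl
          intro a ha
          rw [← Finset.sum_neg_distrib]
          apply Finset.sum_congr rfl
          intro b hb
          rw [← neg_smul]
          congr 1
          by_cases h : a = b
          · subst h
            simp
          · rw [if_neg (fun hh => h hh.symm), if_neg h, map_inv₀, map_sub, hre a ha, hre b hb,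
              ← inv_neg, neg_sub]
        have hterm : ∀ l ∈ t, ∀ l' ∈ t,
            ((if l = l' then (0:ℂ) else (l' - l)⁻¹) • (P l * y * P l')) * A -
              A * ((if l = l' then (0:ℂ) else (l' - l)⁻¹) • (P l * y * P l')) =
            if l = l' then 0 else P l * y * P l' := by
          intro l hl l' hl'
          by_cases h : l = l'
          · rw [if_pos h, if_pos h, zero_smul, zero_mul, mul_zero, sub_zero]
          · rw [if_neg h, if_neg h]
            have h1 : (P l * y * P l') * A = l' • (P l * y * P l') := by
              rw [mul_assoc, mul_assoc, hPA l' hl', mul_smul_comm, mul_smul_comm, mul_assoc]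
            have h2 : A * (P l * y * P l') = l • (P l * y * P l') := by
              rw [← mul_assoc, ← mul_assoc, hAP l hl, smul_mul_assoc, smul_mul_assoc]
            rw [smul_mul_assoc, h1, mul_smul_comm, h2, smul_smul, smul_smul, ← sub_smul,
              ← mul_sub, inv_mul_cancel₀ (sub_ne_zero.mpr (fun hh => h hh.symm)), one_smul]
        have hδx : deltaMap A x = ∑ l ∈ t, ∑ l' ∈ t,
            (if l = l' then 0 else P l * y * P l') := by
          rw [deltaMap_apply, hxdef, Finset.sum_mul, Finset.mul_sum, ← Finset.sum_sub_distrib]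
          apply Finset.sum_congr rfl
          intro l hl
          rw [Finset.sum_mul, Finset.mul_sum, ← Finset.sum_sub_distrib]
          exact Finset.sum_congr rfl fun l' hl' => hterm l hl l' hl'
        have hfull : ∑ l ∈ t, ∑ l' ∈ t, P l * y * P l' = y := by
          have h1 : ∀ l, ∑ l' ∈ t, P l * y * P l' = P l * y := by
            intro l
            rw [← Finset.mul_sum, hsumP, mul_one]
          rw [Finset.sum_congr rfl (fun l _ => h1 l), ← Finset.sum_mul, hsumP, one_mul]
        have hdelta : deltaMap A x = y := by
          rw [hδx]
          have h2 : (∑ l ∈ t, ∑ l' ∈ t, (if l = l' then 0 else P l * y * P l')) =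
              (∑ l ∈ t, ∑ l' ∈ t, P l * y * P l') - ∑ l ∈ t, P l * y * P l := by
            rw [← Finset.sum_sub_distrib]
            apply Finset.sum_congr rfl
            intro l hl
            rw [eq_sub_iff_add_eq, ← Finset.add_sum_erase t (fun l' => P l * y * P l') hl,
              ← Finset.add_sum_erase t (fun l' => if l = l' then 0 else P l * y * P l') hl,
              if_pos rfl, zero_add, add_comm]
            congr 1
            apply Finset.sum_congr rfl
            intro b hb
            rw [if_neg (fun hh => (Finset.mem_erase.mp hb).1 hh.symm)]
          rw [h2, hfull, hyE', sub_zero]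
        exact Submodule.mem_map.mpr ⟨x, ⟨hxcompact, hxstar⟩, hdelta⟩
    have hrange_closed : IsClosed ((Submodule.map (deltaMap A) (Kah H) :
        Submodule ℝ (H →L[ℂ] H)) : Set (H →L[ℂ] H)) := by
      rw [hrange]
      have hset : ((Kh H ⊓ LinearMap.ker EL : Submodule ℝ (H →L[ℂ] H)) :
          Set (H →L[ℂ] H)) = (Kh H : Set (H →L[ℂ] H)) ∩ {x | EL x = 0} := by
        ext x
        simp [Submodule.mem_inf, LinearMap.mem_ker]
      rw [hset]
      exact isClosed_Kh.inter (isClosed_eq hELcont continuous_const)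
    refine ⟨⟨hker_closed, ?_⟩, hrange_closed, ?_⟩
    · -- S
      refine ⟨Kah H ⊓ LinearMap.ker EL, inf_le_left, ?_, ?_, ?_⟩
      · have hset : ((Kah H ⊓ LinearMap.ker EL : Submodule ℝ (H →L[ℂ] H)) :
            Set (H →L[ℂ] H)) = (Kah H : Set (H →L[ℂ] H)) ∩ {x | EL x = 0} := by
          ext x
          simp [Submodule.mem_inf, LinearMap.mem_ker]
        rw [hset]
        exact isClosed_Kah.inter (isClosed_eq hELcont continuous_const)
      · rw [eq_bot_iff]
        rintro x ⟨⟨hxK, hxE⟩, hxK2, hxδ⟩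
        have hxE' : EL x = 0 := hxE
        have hcomm : x * A = A * x := by
          have h0 : deltaMap A x = 0 := hxδ
          rw [deltaMap_apply, sub_eq_zero] at h0
          exact h0
        have : x = 0 := by
          rw [← hELfix x hcomm, hxE']
        simp [this]
      · apply le_antisymm (sup_le inf_le_left inf_le_left)
        intro x hx
        apply Submodule.mem_sup.mpr
        refine ⟨x - EL x, ?_, EL x, ?_, by abel⟩
        · exact Submodule.mem_inf.mpr ⟨Submodule.sub_mem _ hx (hELKah x hx),
            LinearMap.mem_ker.mpr (by rw [map_sub, hELidem, sub_self])⟩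
        · exact Submodule.mem_inf.mpr ⟨hELKah x hx, LinearMap.mem_ker.mpr (hdeltaEL x)⟩
    · -- T
      refine ⟨Kh H ⊓ LinearMap.ker (LinearMap.id - EL), inf_le_left, ?_, ?_, ?_⟩
      · have hset : ((Kh H ⊓ LinearMap.ker (LinearMap.id - EL) : Submodule ℝ (H →L[ℂ] H)) :
            Set (H →L[ℂ] H)) = (Kh H : Set (H →L[ℂ] H)) ∩ {x | x - EL x = 0} := by
          ext x
          simp [Submodule.mem_inf, LinearMap.mem_ker, LinearMap.sub_apply]
        rw [hset]
        exact isClosed_Kh.inter (isClosed_eq (continuous_id.sub hELcont) continuous_const)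
      · rw [hrange, eq_bot_iff]
        rintro x ⟨⟨hxKh, hxfix⟩, hxKh2, hxE⟩
        have h1 : x - EL x = 0 := hxfix
        have h2 : EL x = 0 := hxE
        have : x = 0 := by
          have := h1
          rw [h2, sub_zero] at this
          exact this
        simp [this]
      · rw [hrange]
        apply le_antisymm (sup_le inf_le_left inf_le_left)
        intro x hx
        apply Submodule.mem_sup.mpr
        refine ⟨EL x, ?_, x - EL x, ?_, by abel⟩
        · refine Submodule.mem_inf.mpr ⟨hELKh x hx, LinearMap.mem_ker.mpr ?_⟩
          rw [LinearMap.sub_apply, LinearMap.id_apply, hELidem, sub_self]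
        · exact Submodule.mem_inf.mpr ⟨Submodule.sub_mem _ hx (hELKh x hx),
            LinearMap.mem_ker.mpr (by rw [map_sub, hELidem, sub_self])⟩

end PartB


/-- Theorem 4.3: `δ_A : K(H)_ah → K(H)_h` has closed range iff the spectrum of `A`
is finite, in which case both its kernel and its range are closed complemented
subspaces (of `K(H)_ah` and `K(H)_h` respectively). -/
theorem stmt10 (A : H →L[ℂ] H) (hA : star A = A) :
    (IsClosed ((Submodule.map (deltaMap A) (Kah H) : Submodule ℝ (H →L[ℂ] H)) :
        Set (H →L[ℂ] H)) ↔ (spectrum ℂ A).Finite) ∧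
    ((spectrum ℂ A).Finite →
      (IsClosed ((Kah H ⊓ LinearMap.ker (deltaMap A) : Submodule ℝ (H →L[ℂ] H)) :
          Set (H →L[ℂ] H)) ∧
        ∃ S : Submodule ℝ (H →L[ℂ] H), S ≤ Kah H ∧ IsClosed (S : Set (H →L[ℂ] H)) ∧
          S ⊓ (Kah H ⊓ LinearMap.ker (deltaMap A)) = ⊥ ∧
          S ⊔ (Kah H ⊓ LinearMap.ker (deltaMap A)) = Kah H) ∧
      (IsClosed ((Submodule.map (deltaMap A) (Kah H) : Submodule ℝ (H →L[ℂ] H)) :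
          Set (H →L[ℂ] H)) ∧
        ∃ T : Submodule ℝ (H →L[ℂ] H), T ≤ Kh H ∧ IsClosed (T : Set (H →L[ℂ] H)) ∧
          T ⊓ Submodule.map (deltaMap A) (Kah H) = ⊥ ∧
          T ⊔ Submodule.map (deltaMap A) (Kah H) = Kh H)) := by
  constructor
  · constructor
    · intro hcl
      by_contra hinf
      exact not_isClosed_of_infinite A hA hinf hcl
    · intro hfin
      exact (partB A hA hfin).2.1
  · intro hfin
    exact partB A hA hfin
end
end

section
/- Let A = Σ_{i=1}^n λ_i·p_i be a bounded self-adjoint operator on H with finite spectrum, where λ_1, …, λ_n are distinct real numbers and p_1, …, p_n are mutually orthogonal self-adjoint projections with Σ_{i=1}^n p_i = 1. Then {xA − Ax : x ∈ K(H)} = {z ∈ K(H) : p_i·z·p_i = 0 for i = 1, …, n}, and there exists a constant C > 0 such that C·‖x − P_A(x)‖ ≤ ‖xA − Ax‖ for all x ∈ K(H), where P_A(x) = Σ_{i=1}^n p_i·x·p_i. -/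
noncomputable section

variable {H : Type*} [NormedAddCommGroup H] [InnerProductSpace ℂ H] [CompleteSpace H]

set_option maxHeartbeats 1000000 in
set_option synthInstance.maxHeartbeats 400000 in
/-- For `A = Σ λᵢ pᵢ` self-adjoint with finite spectrum, the range of
`δ_A(x) = xA - Ax` on compacts consists of the compact operators with zero diagonal
(with respect to the decomposition given by the `pᵢ`), and `δ_A` is bounded below
modulo its kernel: `C‖x - P_A(x)‖ ≤ ‖xA - Ax‖` with `P_A(x) = Σ pᵢ x pᵢ`. -/
theorem stmt11 (n : ℕ) (hn : 0 < n) (lam : Fin n → ℝ) (hlam : Function.Injective lam)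
    (P : Fin n → (H →L[ℂ] H)) (hPsa : ∀ i, star (P i) = P i)
    (hPidem : ∀ i, P i * P i = P i)
    (hPorth : ∀ i j, i ≠ j → P i * P j = 0) (hPsum : ∑ i, P i = 1)
    (A : H →L[ℂ] H) (hA : A = ∑ i, (lam i : ℂ) • P i) :
    {y : H →L[ℂ] H | ∃ x : H →L[ℂ] H, IsCompactOperator ⇑x ∧ y = x * A - A * x} =
      {z : H →L[ℂ] H | IsCompactOperator ⇑z ∧ ∀ i, P i * z * P i = 0} ∧
    ∃ C : ℝ, 0 < C ∧ ∀ x : H →L[ℂ] H, IsCompactOperator ⇑x →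
      C * ‖x - ∑ i, P i * x * P i‖ ≤ ‖x * A - A * x‖ := by
  -- basic multiplication facts
  have hPA : ∀ i, P i * A = (lam i : ℂ) • P i := by
    intro i
    rw [hA, Finset.mul_sum, Finset.sum_eq_single i]
    · rw [mul_smul_comm, hPidem]
    · intro j _ hj
      rw [mul_smul_comm, hPorth i j (Ne.symm hj), smul_zero]
    · simp
  have hAP : ∀ i, A * P i = (lam i : ℂ) • P i := by
    intro i
    rw [hA, Finset.sum_mul, Finset.sum_eq_single i]
    · rw [smul_mul_assoc, hPidem]
    · intro j _ hj
      rw [smul_mul_assoc, hPorth j i hj, smul_zero]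
    · simp
  -- key identity
  have key : ∀ (x : H →L[ℂ] H) i j,
      P i * (x * A - A * x) * P j = ((lam j : ℂ) - lam i) • (P i * x * P j) := by
    intro x i j
    have h0 : P i * (x * A - A * x) * P j
        = P i * x * (A * P j) - (P i * A) * (x * P j) := by noncomm_ring
    rw [h0, hAP, hPA, mul_smul_comm, smul_mul_assoc, sub_smul]
    simp [mul_assoc]
  have hdelta : ∀ (y : H →L[ℂ] H) i j,
      (P i * y * P j) * A - A * (P i * y * P j) = ((lam j : ℂ) - lam i) • (P i * y * P j) := by
    intro y i j
    have h1 : (P i * y * P j) * A = P i * y * (P j * A) := by noncomm_ring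
    have h2 : A * (P i * y * P j) = (A * P i) * (y * P j) := by noncomm_ring
    rw [h1, h2, hPA, hAP, mul_smul_comm, smul_mul_assoc, sub_smul]
    simp [mul_assoc]
  -- decomposition of x
  have hdec : ∀ x : H →L[ℂ] H, ∑ i, ∑ j, P i * x * P j = x := by
    intro x
    simp_rw [← Finset.mul_sum]
    rw [hPsum]
    simp_rw [mul_one]
    rw [← Finset.sum_mul, hPsum, one_mul]
  -- compactness helpers
  have hmulc : ∀ (B x C : H →L[ℂ] H), IsCompactOperator ⇑x →
      IsCompactOperator ⇑(B * x * C) := by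
    intro B x C hx
    have h : ⇑(B * x * C) = (⇑B ∘ ⇑x) ∘ ⇑C := by ext v; simp [ContinuousLinearMap.mul_apply]
    rw [h]
    exact (hx.clm_comp B).comp_clm C
  have hsubc : ∀ (B C : H →L[ℂ] H), IsCompactOperator ⇑B → IsCompactOperator ⇑C →
      IsCompactOperator ⇑(B - C) := by
    intro B C hB hC
    have h : ⇑(B - C) = ⇑B - ⇑C := by ext v; simp
    rw [h]; exact hB.sub hC
  have hsumc : ∀ (f : Fin n → (H →L[ℂ] H)), (∀ i, IsCompactOperator ⇑(f i)) →
      IsCompactOperator ⇑(∑ i, f i) := by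
    intro f hf
    refine Finset.sum_induction f (fun B => IsCompactOperator ⇑B) ?_ ?_ ?_
    · intro a b ha hb
      have h : ⇑(a + b) = ⇑a + ⇑b := by ext v; simp
      rw [h]; exact ha.add hb
    · show IsCompactOperator ⇑(0 : H →L[ℂ] H)
      have h : ⇑(0 : H →L[ℂ] H) = (0 : H → H) := rfl
      rw [h]; exact isCompactOperator_zero
    · exact fun i _ => hf i
  have hsmulc : ∀ (c : ℂ) (B : H →L[ℂ] H), IsCompactOperator ⇑B →
      IsCompactOperator ⇑(c • B) := by
    intro c B hB
    have h : ⇑(c • B) = c • ⇑B := by ext v; simp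
    rw [h]; exact hB.smul c
  -- norm of projections ≤ 1
  have hPnorm : ∀ i, ‖P i‖ ≤ 1 := by
    intro i
    have h1 : ‖star (P i) * P i‖ = ‖P i‖ * ‖P i‖ := CStarRing.norm_star_mul_self
    rw [hPsa, hPidem] at h1
    nlinarith [norm_nonneg (P i)]
  constructor
  · ext y
    simp only [Set.mem_setOf_eq]
    constructor
    · rintro ⟨x, hx, rfl⟩
      refine ⟨?_, ?_⟩
      · have h1 : ⇑(x * A) = ⇑x ∘ ⇑A := by ext v; simp [ContinuousLinearMap.mul_apply]
        have h2 : ⇑(A * x) = ⇑A ∘ ⇑x := by ext v; simp [ContinuousLinearMap.mul_apply]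
        refine hsubc _ _ ?_ ?_
        · rw [h1]; exact hx.comp_clm A
        · rw [h2]; exact hx.clm_comp A
      · intro i
        rw [key x i i]
        simp
    · rintro ⟨hy, hdiag⟩
      refine ⟨∑ i, ∑ j, (if i = j then 0 else ((lam j : ℂ) - lam i)⁻¹) • (P i * y * P j),
        ?_, ?_⟩
      · refine hsumc _ fun i => hsumc _ fun j => hsmulc _ _ (hmulc _ _ _ hy)
      · set x : H →L[ℂ] H :=
          ∑ i, ∑ j, (if i = j then 0 else ((lam j : ℂ) - lam i)⁻¹) • (P i * y * P j) with hx
        have hxA : x * A - A * x = ∑ i, ∑ j,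
            (if i = j then 0 else ((lam j : ℂ) - lam i)⁻¹) •
              ((P i * y * P j) * A - A * (P i * y * P j)) := by
          rw [hx, Finset.sum_mul, Finset.mul_sum, ← Finset.sum_sub_distrib]
          refine Finset.sum_congr rfl fun i _ => ?_
          rw [Finset.sum_mul, Finset.mul_sum, ← Finset.sum_sub_distrib]
          refine Finset.sum_congr rfl fun j _ => ?_
          rw [smul_mul_assoc, mul_smul_comm, ← smul_sub]
        rw [hxA]
        have : ∀ i j, (if i = j then 0 else ((lam j : ℂ) - lam i)⁻¹) •
            ((P i * y * P j) * A - A * (P i * y * P j)) = P i * y * P j := by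
          intro i j
          rw [hdelta]
          by_cases h : i = j
          · subst h
            simp [hdiag i]
          · have hne : (lam j : ℂ) - lam i ≠ 0 := by
              intro hc
              apply h
              apply hlam
              have h2 : (lam i : ℂ) = lam j := by linear_combination -hc
              exact_mod_cast h2
            simp only [h, if_neg, ite_false]
            rw [smul_smul, inv_mul_cancel₀ hne, one_smul]
        simp_rw [this]
        rw [hdec]
  · -- the bound
    have hspos : ∀ i j : Fin n, i ≠ j → 0 < |lam j - lam i| := by
      intro i j hij
      rw [abs_pos, sub_ne_zero]
      exact fun hc => hij (hlam hc).symm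
    set s : Finset (Fin n × Fin n) := Finset.univ.filter (fun p => p.1 ≠ p.2) with hs
    set d : ℝ := if h : s.Nonempty then s.inf' h (fun p => |lam p.2 - lam p.1|) else 1 with hdd
    have hd : 0 < d := by
      rw [hdd]
      split_ifs with h
      · rw [Finset.lt_inf'_iff]
        rintro ⟨i, j⟩ hb
        simp only [hs, Finset.mem_filter] at hb
        exact hspos i j hb.2
      · norm_num
    have hdle : ∀ i j : Fin n, i ≠ j → d ≤ |lam j - lam i| := by
      intro i j hij
      have hmem : (i, j) ∈ s := by simp [hs, hij]
      rw [hdd]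
      rw [dif_pos ⟨_, hmem⟩]
      exact Finset.inf'_le _ hmem
    refine ⟨d / (n : ℝ)^2, by positivity, ?_⟩
    intro x _
    set D : H →L[ℂ] H := x * A - A * x with hD
    -- bound each off-diagonal block
    have hblock : ∀ i j : Fin n, i ≠ j → ‖P i * x * P j‖ ≤ ‖D‖ / d := by
      intro i j hij
      have h1 : ‖P i * D * P j‖ ≤ ‖D‖ := by
        calc ‖P i * D * P j‖ ≤ ‖P i * D‖ * ‖P j‖ := norm_mul_le _ _
        _ ≤ ‖P i‖ * ‖D‖ * ‖P j‖ := by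
            gcongr
            exact norm_mul_le _ _
        _ ≤ 1 * ‖D‖ * 1 := by
            gcongr
            exacts [hPnorm i, hPnorm j]
        _ = ‖D‖ := by ring
      have h2 : ‖P i * D * P j‖ = |lam j - lam i| * ‖P i * x * P j‖ := by
        rw [hD, key x i j]
        rw [norm_smul]
        congr 1
        rw [← Complex.ofReal_sub]
        rw [Complex.norm_real, Real.norm_eq_abs]
      have h3 : |lam j - lam i| * ‖P i * x * P j‖ ≤ ‖D‖ := h2 ▸ h1
      rw [le_div_iff₀ hd]
      calc ‖P i * x * P j‖ * d ≤ ‖P i * x * P j‖ * |lam j - lam i| := by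
            gcongr
            exact hdle i j hij
        _ ≤ ‖D‖ := by rw [mul_comm]; exact h3
    -- rewrite the off-diagonal part
    have hoff : x - ∑ i, P i * x * P i
        = ∑ i, ∑ j, (if i = j then 0 else P i * x * P j) := by
      have h1 : ∑ i, ∑ j, (if i = j then 0 else P i * x * P j)
          = (∑ i, ∑ j, P i * x * P j) - ∑ i, P i * x * P i := by
        rw [← Finset.sum_sub_distrib]
        refine Finset.sum_congr rfl fun i _ => ?_
        have hti : P i * x * P i = ∑ j, if i = j then P i * x * P j else 0 := by simp
        conv_rhs => rw [hti]
        rw [← Finset.sum_sub_distrib]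
        refine Finset.sum_congr rfl fun j _ => ?_
        by_cases h : i = j <;> simp [h]
      rw [h1, hdec]
    have hnorm : ‖x - ∑ i, P i * x * P i‖ ≤ (n : ℝ)^2 * (‖D‖ / d) := by
      rw [hoff]
      calc ‖∑ i, ∑ j, (if i = j then 0 else P i * x * P j)‖
          ≤ ∑ i, ‖∑ j, (if i = j then 0 else P i * x * P j)‖ := norm_sum_le _ _
        _ ≤ ∑ i : Fin n, ∑ j : Fin n, ‖(if i = j then (0 : H →L[ℂ] H) else P i * x * P j)‖ :=
            Finset.sum_le_sum fun i _ => norm_sum_le _ _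
        _ ≤ ∑ _i : Fin n, ∑ _j : Fin n, (‖D‖ / d) := by
            refine Finset.sum_le_sum fun i _ => Finset.sum_le_sum fun j _ => ?_
            by_cases h : i = j
            · simp only [h, if_pos, ite_true, norm_zero]
              positivity
            · simp only [h, ite_false]
              exact hblock i j h
        _ = (n : ℝ)^2 * (‖D‖ / d) := by
            simp [Finset.sum_const, Finset.card_univ]
            ring
    calc d / (n : ℝ)^2 * ‖x - ∑ i, P i * x * P i‖
        ≤ d / (n : ℝ)^2 * ((n : ℝ)^2 * (‖D‖ / d)) := by
          gcongr
      _ = ‖D‖ := by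
          have hn' : (n : ℝ) ≠ 0 := Nat.cast_ne_zero.mpr hn.ne'
          field_simp
end
end
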